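/- Let k be an infinite field and V a k-vector space of finite dimension r+1. Let U_1,…,U_s ⊆ V be linear subspaces with dim U_i = r − l_i where each l_i ≥ 1, such that U_i ⊄ U_s for every i < s, and such that dim(⋂_{i∈S} U_i) ≤ r − Σ_{i∈S} l_i for every nonempty S ⊆ {1,…,s}. Then there exists a linear hyperplane H ⊆ V (a subspace of dimension r) containing U_s such that dim(⋂_{i∈S}(U_i ∩ H)) ≤ (r−1) − Σ_{i∈S} l_i for every nonempty S ⊆ {1,…,s−1}. -/

import Mathlib

open Finset

private lemma dual_avoid (k : Type*) [Field k] [Infinite k]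
    (Q : Type*) [AddCommGroup Q] [Module k Q] [FiniteDimensional k Q] [Nontrivial Q]
    {ι : Type*} [Finite ι] (q : ι → Q) (hq : ∀ i, q i ≠ 0) :
    ∃ φ : Module.Dual k Q, φ ≠ 0 ∧ ∀ i, φ (q i) ≠ 0 := by
  classical
  set p : Option ι → Subspace k (Module.Dual k Q) :=
    fun o => o.elim ⊥ (fun i => LinearMap.ker (Module.Dual.eval k Q (q i))) with hp
  haveI : Finite (Option ι) := Finite.of_equiv (ι ⊕ PUnit.{1}) (Equiv.optionEquivSumPUnit ι).symm
  by_contra h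
  push_neg at h
  have hcover : ⋃ o, ((p o : Set (Module.Dual k Q))) = Set.univ := by
    ext φ
    simp only [Set.mem_iUnion, Set.mem_univ, iff_true]
    by_cases hφ : φ = 0
    · exact ⟨none, by simp [hp, hφ]⟩
    · obtain ⟨i, hi⟩ := h φ hφ
      exact ⟨some i, by simpa [hp, LinearMap.mem_ker] using hi⟩
  obtain ⟨o, ho⟩ := Subspace.exists_eq_top_of_iUnion_eq_univ hcover
  cases o with
  | none =>
    obtain ⟨x, hx⟩ := exists_ne (0 : Q)
    apply hx
    rw [← Module.forall_dual_apply_eq_zero_iff k x]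
    intro φ
    have : φ ∈ (⊥ : Subspace k (Module.Dual k Q)) := by rw [show (⊥ : Subspace k (Module.Dual k Q)) = p none from rfl, ho]; trivial
    simp only [Submodule.mem_bot] at this
    simp [this]
  | some i =>
    apply hq i
    rw [← Module.forall_dual_apply_eq_zero_iff k (q i)]
    intro φ
    have : φ ∈ p (some i) := ho ▸ Submodule.mem_top
    simpa [hp, LinearMap.mem_ker] using this

/-- The generic-hyperplane induction step in the proof that a product of linear
projections is dominant. Let `k` be an infinite field and `V` a `k`-vector space of
dimension `r+1`. Given linear subspaces `U_1,…,U_s` (here indexed by `Fin (m+1)`, with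
the last index playing the role of `s`) with `dim U_i = r − l_i`, `l_i ≥ 1`,
`U_i ⊄ U_s` for `i ≠ s`, and `dim(⋂_{i∈S} U_i) ≤ r − Σ_{i∈S} l_i` for all nonempty
`S`, there is a hyperplane `H ⊇ U_s` with
`dim(⋂_{i∈S}(U_i ∩ H)) ≤ (r−1) − Σ_{i∈S} l_i` for every nonempty `S` not containing
the last index. -/
theorem generic_hyperplane_step (k : Type*) [Field k] [Infinite k]
    (V : Type*) [AddCommGroup V] [Module k V] [FiniteDimensional k V]
    (r m : ℕ) (hV : Module.finrank k V = r + 1)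
    (U : Fin (m + 1) → Submodule k V) (l : Fin (m + 1) → ℕ)
    (hl : ∀ i, 1 ≤ l i)
    (hdim : ∀ i, Module.finrank k ↥(U i) + l i = r)
    (hnsub : ∀ i, i ≠ Fin.last m → ¬ U i ≤ U (Fin.last m))
    (hint : ∀ S : Finset (Fin (m + 1)), S.Nonempty →
      Module.finrank k ↥(⨅ i ∈ S, U i) + ∑ i ∈ S, l i ≤ r) :
    ∃ H : Submodule k V, Module.finrank k ↥H = r ∧ U (Fin.last m) ≤ H ∧
      ∀ S : Finset (Fin (m + 1)), S.Nonempty → Fin.last m ∉ S →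
        Module.finrank k ↥(⨅ i ∈ S, U i ⊓ H) + ∑ i ∈ S, l i + 1 ≤ r := by
  classical
  set Ul := U (Fin.last m) with hUl
  set W : Finset (Fin (m + 1)) → Submodule k V := fun S => ⨅ i ∈ S, U i with hW
  -- Ul is a proper subspace
  have hUl_ne_top : Ul ≠ ⊤ := by
    intro h
    have h1 := hdim (Fin.last m)
    rw [← hUl, h, finrank_top, hV] at h1
    omega
  have : Nontrivial (V ⧸ Ul) :=
    Submodule.Quotient.nontrivial_iff.mpr hUl_ne_top
  -- the tight sets
  set ι := {S : Finset (Fin (m + 1)) //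
      S.Nonempty ∧ Fin.last m ∉ S ∧
      ¬ (Module.finrank k ↥(W S) + ∑ i ∈ S, l i + 1 ≤ r)} with hι
  -- for each tight set, W S is not contained in Ul
  have hnle : ∀ i : ι, ¬ (W i.1 ≤ Ul) := by
    rintro ⟨S, hS, hlast, htight⟩ hle
    have heq : Module.finrank k ↥(W S) + ∑ i ∈ S, l i = r := by
      have h' : Module.finrank k ↥(W S) + ∑ i ∈ S, l i ≤ r := hint S hS
      omega
    have h2 := hint (insert (Fin.last m) S) ⟨_, Finset.mem_insert_self _ _⟩
    have hiInf : (⨅ i ∈ insert (Fin.last m) S, U i) = W S := by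
      rw [Finset.iInf_insert, ← hUl, inf_eq_right.mpr hle]
    rw [hiInf, Finset.sum_insert hlast] at h2
    have := hl (Fin.last m)
    omega
  choose v hvW hvU using fun i : ι => SetLike.not_le_iff_exists.mp (hnle i)
  -- find a functional on the quotient not vanishing at any v i
  set q : ι → V ⧸ Ul := fun i => Ul.mkQ (v i) with hq
  have hq0 : ∀ i, q i ≠ 0 := by
    intro i h
    exact hvU i ((Submodule.Quotient.mk_eq_zero Ul).mp h)
  obtain ⟨φ, hφ0, hφ⟩ := dual_avoid k (V ⧸ Ul) q hq0
  set ψ : V →ₗ[k] k := φ.comp Ul.mkQ with hψ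
  refine ⟨LinearMap.ker ψ, ?_, ?_, ?_⟩
  · -- finrank is r
    have hsurj : Function.Surjective ψ := by
      obtain ⟨y, hy⟩ := DFunLike.ne_iff.mp hφ0
      obtain ⟨x, rfl⟩ := Ul.mkQ_surjective y
      intro a
      refine ⟨(a / ψ x) • x, ?_⟩
      have hψx : ψ x ≠ 0 := by simpa [hψ] using hy
      rw [map_smul, smul_eq_mul, div_mul_cancel₀ _ hψx]
    have h1 := LinearMap.finrank_range_add_finrank_ker ψ
    rw [LinearMap.range_eq_top.mpr hsurj, finrank_top, hV, Module.finrank_self] at h1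
    omega
  · -- contains Ul
    intro x hx
    simp [hψ, LinearMap.mem_ker, (Submodule.Quotient.mk_eq_zero Ul).mpr hx]
  · -- the dimension bound
    intro S hS hlast
    have hle1 : (⨅ i ∈ S, U i ⊓ LinearMap.ker ψ) ≤ W S :=
      iInf_mono fun i => iInf_mono fun _ => inf_le_left
    have hmono := Submodule.finrank_mono hle1
    by_cases htight : Module.finrank k ↥(W S) + ∑ i ∈ S, l i + 1 ≤ r
    · omega
    · set i : ι := ⟨S, hS, hlast, htight⟩ with hi
      have heq : Module.finrank k ↥(W S) + ∑ j ∈ S, l j = r := by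
        have h' : Module.finrank k ↥(W S) + ∑ j ∈ S, l j ≤ r := hint S hS
        omega
      -- v i witnesses strictness
      have hvH : v i ∉ LinearMap.ker ψ := by
        intro h
        exact hφ i (by simpa [hψ, hq] using h)
      have hle2 : (⨅ j ∈ S, U j ⊓ LinearMap.ker ψ) ≤ LinearMap.ker ψ := by
        obtain ⟨j0, hj0⟩ := hS
        exact le_trans (iInf₂_le j0 hj0) inf_le_right
      have hlt : (⨅ j ∈ S, U j ⊓ LinearMap.ker ψ) < W S := by
        refine lt_of_le_of_ne hle1 fun h => ?_
        exact hvH (hle2 (h ▸ hvW i))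
      have := Submodule.finrank_lt_finrank_of_lt hlt
      omega
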